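/- Termination of the value computation algorithm: let c ∈ ℕ, let the weighted system (N,R,wt,K) be c-closed, and consider the value computation recursion (V_n). Then the recursion stabilizes, i.e. there exists n₀ ∈ ℕ such that V_n(A) = V_{n₀}(A) for every n ≥ n₀ and every nonterminal A ∈ N. -/

import Mathlib

open scoped Classical

/-- Trees over a ranked set `R` with arity function `ar`:
`RT.node r ts` is a tree whose root is labelled `r` and which has `ar r` children. -/
inductive RT (R : Type) (ar : R → ℕ) : Type
  | node (r : R) (children : Fin (ar r) → RT R ar)

namespace RT

variable {R : Type} {ar : R → ℕ}

/-- The rule labelling the root of a tree. -/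
def rootRule : RT R ar → R
  | node r _ => r

/-- The subtree at a position (`none` if the position is not a position of the tree). -/
def subAt : RT R ar → List ℕ → Option (RT R ar)
  | t, [] => some t
  | node r ts, i :: p => if h : i < ar r then subAt (ts ⟨i, h⟩) p else none

/-- Replace the subtree at a position by another tree. -/
def replaceAt : RT R ar → List ℕ → RT R ar → RT R ar
  | _, [], s => s
  | node r ts, i :: p, s => node r fun j => if j.1 = i then replaceAt (ts j) p s else ts j

/-- The sequence of rule labels from the root to a position, inclusive. -/
def seqTo : RT R ar → List ℕ → Option (List R)
  | node r _, [] => some [r]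
  | node r ts, i :: p => if h : i < ar r then (seqTo (ts ⟨i, h⟩) p).map (fun l => r :: l) else none

/-- `p` is a leaf position of `d`, i.e. a valid position with no child positions. -/
def LeafAt (d : RT R ar) (p : List ℕ) : Prop :=
  ∃ t, subAt d p = some t ∧ ar t.rootRule = 0

/-- The height of a tree: `0` on nullary nodes, otherwise `1` plus the maximum height
of the direct subtrees. -/
def height : RT R ar → ℕ
  | node _ ts => Finset.univ.sup fun i => height (ts i) + 1

end RT

/-- The weight of a tree: evaluate it bottom-up, interpreting each rule `r` by the
operation `wt r`. -/
def wtval {K R : Type} {ar : R → ℕ} (wt : ∀ r : R, (Fin (ar r) → K) → K) : RT R ar → K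
  | .node r ts => wt r fun i => wtval wt (ts i)

section Cyclicity

variable {R : Type} {ar : R → ℕ}

/-- A string over `R` is an elementary cycle if it has length `> 1`, its first and last
symbols coincide, and it becomes repetition-free after deleting its last (resp. first)
symbol. -/
def ElementaryCycle (w : List R) : Prop :=
  1 < w.length ∧ w.head? = w.getLast? ∧ w.dropLast.Nodup ∧ w.tail.Nodup

/-- `ρ` is `(c,w)`-cyclic: `ρ = v₀ w v₁ ⋯ w v_c` (with `c` occurrences of the elementary
cycle `w`) where `w` is not an infix of any `vᵢ`. -/
def CWCyclic (c : ℕ) (w ρ : List R) : Prop :=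
  ElementaryCycle w ∧
  ∃ v : ℕ → List R,
    ρ = v 0 ++ (((List.range c).map fun i => w ++ v (i + 1)).flatten) ∧
    ∀ i ≤ c, ¬ w <:+: v i

/-- `ρ` is `c`-cyclic: it is `(c,w)`-cyclic for some elementary cycle `w` and not
`(c',w')`-cyclic for any `c' > c` and elementary cycle `w'`. -/
def CCyclic (c : ℕ) (ρ : List R) : Prop :=
  (∃ w, CWCyclic c w ρ) ∧ ∀ c', c < c' → ∀ w', ¬ CWCyclic c' w' ρ

/-- The leaf position `p` of `d` is `(c,w)`-cyclic. -/
def LeafCW (c : ℕ) (w : List R) (d : RT R ar) (p : List ℕ) : Prop :=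
  RT.LeafAt d p ∧ ∃ ρ, RT.seqTo d p = some ρ ∧ CWCyclic c w ρ

/-- The leaf position `p` of `d` is `c`-cyclic. -/
def LeafC (c : ℕ) (d : RT R ar) (p : List ℕ) : Prop :=
  RT.LeafAt d p ∧ ∃ ρ, RT.seqTo d p = some ρ ∧ CCyclic c ρ

/-- The tree `d` is `c`-cyclic: some leaf of `d` is `c`-cyclic and no leaf of `d` is
`c'`-cyclic for any `c' > c`. -/
def TreeC (c : ℕ) (d : RT R ar) : Prop :=
  (∃ p, LeafC c d p) ∧ ∀ c', c < c' → ∀ p, ¬ LeafC c' d p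

/-- `d ⊢_w d'` : there are positions `p ≤ p'` of `d` whose connecting label sequence is
`w`, and `d'` is obtained by replacing the subtree at `p` by the subtree at `p'`.
(The position `p'` is `p ++ q`.) -/
def CutW (w : List R) (d d' : RT R ar) : Prop :=
  ∃ p q t s, RT.subAt d p = some t ∧ RT.subAt t q = some s ∧
    RT.seqTo t q = some w ∧ d' = RT.replaceAt d p s

/-- `d ⊢ d'` : `d ⊢_w d'` for some elementary cycle `w`. -/
def Cut (d d' : RT R ar) : Prop := ∃ w, ElementaryCycle w ∧ CutW w d d'

/-- The set of `w`-cutout trees of `d`. -/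
def cotreesW (w : List R) (d : RT R ar) : Set (RT R ar) := {d' | Relation.TransGen (CutW w) d d'}

/-- The set of cutout trees of `d`. -/
def cotrees (d : RT R ar) : Set (RT R ar) := {d' | Relation.TransGen Cut d d'}

end Cyclicity

section Rules

variable {N R : Type}

/-- Well-sorted trees over a rule system given by `lhs` and `rhs`: at each node labelled
`r`, the `i`-th child is a well-sorted tree whose root label has left-hand side equal to
the `i`-th nonterminal of `rhs r`. -/
inductive WellSorted (lhs : R → N) (rhs : R → List N) :
    RT R (fun r => (rhs r).length) → Prop
  | node (r : R) (ts : Fin (rhs r).length → RT R fun r => (rhs r).length)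
      (hsort : ∀ i, lhs (ts i).rootRule = (rhs r).get i)
      (hrec : ∀ i, WellSorted lhs rhs (ts i)) : WellSorted lhs rhs (RT.node r ts)

/-- `T_R` : the set of (well-sorted) trees over the rule system. -/
def TRset (lhs : R → N) (rhs : R → List N) : Set (RT R fun r => (rhs r).length) :=
  {d | WellSorted lhs rhs d}

/-- `(T_R)_A` : the set of trees of sort `A`. -/
def TRA (lhs : R → N) (rhs : R → List N) (A : N) : Set (RT R fun r => (rhs r).length) :=
  {d | WellSorted lhs rhs d ∧ lhs d.rootRule = A}

/-- `T_R^{(c)}` : the set of trees that are `c'`-cyclic for some `c' ≤ c`. -/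
def TRcset (lhs : R → N) (rhs : R → List N) (c : ℕ) : Set (RT R fun r => (rhs r).length) :=
  {d | WellSorted lhs rhs d ∧ ∃ c' ≤ c, TreeC c' d}

end Rules

/-- An infinitary sum operation on a commutative monoid `K`, turning it into a complete
monoid: the sum of the empty family is `0`, the sum of a singleton family is its member,
the sum of a two-element family is the binary sum, and the partition law holds (every
partition of a countable index set `I` into sets indexed by `J` is given by the fibers
of a map `g : I → J`). -/
structure InfSum (K : Type) [AddCommMonoid K] where
  isum : ∀ {I : Type} [Countable I], (I → K) → K
  isum_empty : ∀ {I : Type} [Countable I] (f : I → K), IsEmpty I → isum f = 0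
  isum_single : ∀ {I : Type} [Countable I] (f : I → K) (j : I), (∀ i, i = j) → isum f = f j
  isum_pair : ∀ {I : Type} [Countable I] (f : I → K) (j j' : I), j ≠ j' →
    (∀ i, i = j ∨ i = j') → isum f = f j + f j'
  isum_partition : ∀ {I J : Type} [Countable I] [Countable J] (f : I → K) (g : I → J),
    isum f = isum fun j : J => isum fun i : {i : I // g i = j} => f i.1

section MMonoid

variable {K : Type} [AddCommMonoid K]

/-- A complete monoid is d-complete if, whenever all the partial sums `Σ_{i ≤ n} f i`
eventually equal `k`, the infinitary sum of the family equals `k`. -/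
def InfSum.DComplete (S : InfSum K) : Prop :=
  ∀ (k : K) (f : ℕ → K),
    (∃ n₀ : ℕ, ∀ n, n₀ ≤ n → (∑ i ∈ Finset.range (n + 1), f i) = k) → S.isum f = k

/-- A complete monoid is completely idempotent if the infinitary sum of every constant
family over a nonempty countable index set is that constant. -/
def InfSum.CompletelyIdempotent (S : InfSum K) : Prop :=
  ∀ (I : Type) [Countable I], Nonempty I → ∀ k : K, S.isum (fun _ : I => k) = k

/-- The family `Ω` of operation sets contains all the null (constantly `0`) operations. -/
def HasZeroOps (Ω : ∀ n : ℕ, Set ((Fin n → K) → K)) : Prop :=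
  ∀ n : ℕ, (fun _ : Fin n → K => (0 : K)) ∈ Ω n

/-- Distributivity of an M-monoid: every operation in `Ω` distributes over `+` in each
argument, and `0` is absorbing for every operation in `Ω`. -/
def DistributiveOps (Ω : ∀ n : ℕ, Set ((Fin n → K) → K)) : Prop :=
  ∀ n : ℕ, ∀ ω ∈ Ω n,
    (∀ (x : Fin n → K) (i : Fin n) (a b : K),
      ω (Function.update x i (a + b)) = ω (Function.update x i a) + ω (Function.update x i b)) ∧
    (∀ x : Fin n → K, (∃ i, x i = 0) → ω x = 0)

end MMonoid

/-- The weighted system `(N, R, wt, K)` is `c`-closed: for every well-sorted tree `d` and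
elementary cycle `w` such that some leaf position of `d` is `(c+1,w)`-cyclic, the weight
of `d` is subsumed by the (finite) `⊕`-sum of the weights of the `w`-cutout trees of `d`. -/
def CClosed {K : Type} [AddCommMonoid K] {N R : Type} (lhs : R → N) (rhs : R → List N)
    (wt : ∀ r : R, (Fin (rhs r).length → K) → K) (c : ℕ) : Prop :=
  ∀ d : RT R (fun r => (rhs r).length), WellSorted lhs rhs d →
    ∀ w : List R, ElementaryCycle w → (∃ p, LeafCW (c + 1) w d p) →
      (wtval wt d + ∑ᶠ d' ∈ cotreesW w d, wtval wt d') = ∑ᶠ d' ∈ cotreesW w d, wtval wt d'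

section ValueComputation

variable {K : Type} [AddCommMonoid K] {N R : Type} [Fintype N] [Nonempty N] [Fintype R]

/-- `select e n` : the nonterminal treated in the `n`-th iteration of the inner for loop,
given an enumeration `e` of the nonterminals. -/
def select (e : Fin (Fintype.card N) → N) (n : ℕ) : N :=
  e ⟨n % Fintype.card N, Nat.mod_lt _ Fintype.card_pos⟩

/-- The value computation recursion `V_n : N → K`. -/
noncomputable def Vrec (lhs : R → N) (rhs : R → List N)
    (wt : ∀ r : R, (Fin (rhs r).length → K) → K)
    (e : Fin (Fintype.card N) → N) : ℕ → N → K
  | 0, _ => 0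
  | n + 1, A =>
      if select e n = A then
        ∑ᶠ r ∈ {r : R | lhs r = A}, wt r fun i => Vrec lhs rhs wt e n ((rhs r).get i)
      else Vrec lhs rhs wt e n A

/-- The derivation-set recursion `𝒱_n : N → P(T_R)`. -/
noncomputable def Mrec (lhs : R → N) (rhs : R → List N) (e : Fin (Fintype.card N) → N) :
    ℕ → N → Set (RT R fun r => (rhs r).length)
  | 0, _ => ∅
  | n + 1, A =>
      if select e n = A then
        {d | ∃ (r : R) (_ : lhs r = A) (ts : Fin (rhs r).length → RT R fun r => (rhs r).length),
          d = RT.node r ts ∧ ∀ i, ts i ∈ Mrec lhs rhs e n ((rhs r).get i)}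
      else Mrec lhs rhs e n A

end ValueComputation

/-! ### Auxiliary lemmas: basic tree facts -/

namespace RT

variable {R : Type} {ar : R → ℕ}

/-- Number of nodes of a tree. -/
def numNodes : RT R ar → ℕ
  | node _ ts => 1 + Finset.univ.sum fun i => numNodes (ts i)

lemma numNodes_pos (d : RT R ar) : 0 < d.numNodes := by
  cases d with
  | node r ts => exact Nat.lt_of_lt_of_le Nat.zero_lt_one (Nat.le_add_right _ _)


@[simp] lemma subAt_nil (d : RT R ar) : subAt d [] = some d := by cases d; rfl

@[simp] lemma replaceAt_nil (d s : RT R ar) : replaceAt d [] s = s := by cases d; rfl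

lemma subAt_cons (r : R) (ts : Fin (ar r) → RT R ar) (i : ℕ) (p : List ℕ) :
    subAt (node r ts) (i :: p) = if h : i < ar r then subAt (ts ⟨i, h⟩) p else none := rfl

lemma subAt_append (p : List ℕ) (d : RT R ar) (q : List ℕ) :
    subAt d (p ++ q) = (subAt d p).bind (fun t => subAt t q) := by
  induction p generalizing d with
  | nil => simp [subAt]
  | cons i p ih =>
    cases d with
    | node r ts =>
      by_cases h : i < ar r
      · simpa [subAt, h] using ih (ts ⟨i, h⟩)
      · simp [subAt, h]

lemma replaceAt_self (p : List ℕ) (d t : RT R ar) (h : subAt d p = some t) :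
    replaceAt d p t = d := by
  induction p generalizing d with
  | nil => simp at h; simp [h]
  | cons i p ih =>
    cases d with
    | node r ts =>
      by_cases hi : i < ar r
      · simp only [subAt, hi, dif_pos] at h
        simp only [replaceAt, node.injEq, heq_eq_eq, true_and]
        funext j
        by_cases hj : j.1 = i
        · have hj' : j = ⟨i, hi⟩ := Fin.ext hj
          subst hj'
          simp [ih _ h]
        · simp [hj]
      · simp [subAt, hi] at h

lemma subAt_replaceAt (p : List ℕ) (d s : RT R ar) (h : (subAt d p).isSome) :
    subAt (replaceAt d p s) p = some s := by
  induction p generalizing d with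
  | nil => simp
  | cons i p ih =>
    cases d with
    | node r ts =>
      by_cases hi : i < ar r
      · rw [subAt_cons, dif_pos hi] at h
        show subAt (node r fun j => if j.1 = i then replaceAt (ts j) p s else ts j)
          (i :: p) = some s
        rw [subAt_cons, dif_pos hi]
        simp only [if_pos rfl]
        exact ih _ h
      · simp [subAt, hi] at h

lemma replaceAt_replaceAt (p : List ℕ) (d x y : RT R ar) :
    replaceAt (replaceAt d p x) p y = replaceAt d p y := by
  induction p generalizing d with
  | nil => simp
  | cons i p ih =>
    cases d with
    | node r ts =>
      simp only [replaceAt, node.injEq, heq_eq_eq, true_and]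
      funext j
      by_cases hj : j.1 = i <;> simp [hj, ih]

lemma replaceAt_append (p : List ℕ) (d t : RT R ar) (π : List ℕ) (s : RT R ar)
    (h : subAt d p = some t) :
    replaceAt d (p ++ π) s = replaceAt d p (replaceAt t π s) := by
  induction p generalizing d with
  | nil => simp at h; simp [h]
  | cons i p ih =>
    cases d with
    | node r ts =>
      by_cases hi : i < ar r
      · simp only [subAt, hi, dif_pos] at h
        simp only [List.cons_append, replaceAt, node.injEq, heq_eq_eq, true_and]
        funext j
        by_cases hj : j.1 = i
        · have hj' : j = ⟨i, hi⟩ := Fin.ext hj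
          subst hj'
          simp [ih _ h]
        · simp [hj]
      · simp [subAt, hi] at h

lemma numNodes_subAt_le (q : List ℕ) (t s : RT R ar) (h : subAt t q = some s) :
    numNodes s ≤ numNodes t := by
  induction q generalizing t with
  | nil => simp at h; subst h; exact le_rfl
  | cons i q ih =>
    cases t with
    | node r ts =>
      by_cases hi : i < ar r
      · simp only [subAt, hi, dif_pos] at h
        calc numNodes s ≤ numNodes (ts ⟨i, hi⟩) := ih _ h
        _ ≤ Finset.univ.sum fun j => numNodes (ts j) :=
          Finset.single_le_sum (f := fun j => numNodes (ts j))
            (fun j _ => Nat.zero_le _) (Finset.mem_univ (⟨i, hi⟩ : Fin (ar r)))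
        _ ≤ numNodes (node r ts) := Nat.le_add_left _ _
      · simp [subAt, hi] at h

lemma numNodes_subAt_lt (q : List ℕ) (t s : RT R ar) (h : subAt t q = some s)
    (hq : q ≠ []) : numNodes s < numNodes t := by
  cases q with
  | nil => exact absurd rfl hq
  | cons i q =>
    cases t with
    | node r ts =>
      by_cases hi : i < ar r
      · simp only [subAt, hi, dif_pos] at h
        calc numNodes s ≤ numNodes (ts ⟨i, hi⟩) := numNodes_subAt_le _ _ _ h
        _ ≤ Finset.univ.sum fun j => numNodes (ts j) :=
          Finset.single_le_sum (f := fun j => numNodes (ts j))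
            (fun j _ => Nat.zero_le _) (Finset.mem_univ (⟨i, hi⟩ : Fin (ar r)))
        _ < numNodes (node r ts) := by
          show _ < 1 + _
          omega
      · simp [subAt, hi] at h

lemma numNodes_replaceAt_lt (p : List ℕ) (d t s : RT R ar) (h : subAt d p = some t)
    (hs : numNodes s < numNodes t) : numNodes (replaceAt d p s) < numNodes d := by
  induction p generalizing d with
  | nil => simp at h; subst h; simpa
  | cons i p ih =>
    cases d with
    | node r ts =>
      by_cases hi : i < ar r
      · simp only [subAt, hi, dif_pos] at h
        have hsum : (Finset.univ.sum fun j =>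
            numNodes (if j.1 = i then replaceAt (ts j) p s else ts j))
            < Finset.univ.sum fun j => numNodes (ts j) := by
          apply Finset.sum_lt_sum
          · intro j _
            by_cases hj : j.1 = i
            · have hj' : j = ⟨i, hi⟩ := Fin.ext hj
              subst hj'
              simp only [if_pos rfl]
              exact le_of_lt (ih _ h)
            · simp [hj]
          · refine ⟨⟨i, hi⟩, Finset.mem_univ _, ?_⟩
            simp only [if_pos rfl]
            exact ih _ h
        show numNodes (node r fun j => if j.1 = i then replaceAt (ts j) p s else ts j)
          < numNodes (node r ts)
        show (1 + _) < (1 + _)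
        exact Nat.add_lt_add_left hsum 1
      · simp [subAt, hi] at h

lemma seqTo_length (p : List ℕ) (d : RT R ar) (ρ : List R) (h : seqTo d p = some ρ) :
    ρ.length = p.length + 1 := by
  induction p generalizing d ρ with
  | nil => cases d with
    | node r ts => simp [seqTo] at h; subst h; rfl
  | cons i p ih =>
    cases d with
    | node r ts =>
      by_cases hi : i < ar r
      · simp only [seqTo, hi, dif_pos, Option.map_eq_some_iff] at h
        obtain ⟨l, hl, rfl⟩ := h
        simp [ih _ _ hl]
      · simp [seqTo, hi] at h

lemma seqTo_isSome_of_subAt (p : List ℕ) (d t : RT R ar) (h : subAt d p = some t) :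
    ∃ ρ, seqTo d p = some ρ := by
  induction p generalizing d with
  | nil => cases d with
    | node r ts => exact ⟨[r], rfl⟩
  | cons i p ih =>
    cases d with
    | node r ts =>
      by_cases hi : i < ar r
      · simp only [subAt, hi, dif_pos] at h
        obtain ⟨ρ, hρ⟩ := ih _ h
        exact ⟨r :: ρ, by simp [seqTo, hi, hρ]⟩
      · simp [subAt, hi] at h

lemma seqTo_head (q : List ℕ) (t : RT R ar) (w : List R) (h : seqTo t q = some w) :
    w.head? = some t.rootRule := by
  cases t with
  | node r ts =>
    cases q with
    | nil => simp [seqTo] at h; subst h; rfl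
    | cons i q =>
      by_cases hi : i < ar r
      · simp only [seqTo, hi, dif_pos, Option.map_eq_some_iff] at h
        obtain ⟨l, _, rfl⟩ := h
        rfl
      · simp [seqTo, hi] at h

lemma seqTo_getLast (q : List ℕ) (t s : RT R ar) (w : List R)
    (hsub : subAt t q = some s) (h : seqTo t q = some w) :
    w.getLast? = some s.rootRule := by
  induction q generalizing t w with
  | nil =>
    cases t with
    | node r ts =>
      simp [subAt] at hsub
      simp [seqTo] at h
      subst hsub; subst h; rfl
  | cons i q ih =>
    cases t with
    | node r ts =>
      by_cases hi : i < ar r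
      · simp only [subAt, hi, dif_pos] at hsub
        simp only [seqTo, hi, dif_pos, Option.map_eq_some_iff] at h
        obtain ⟨l, hl, rfl⟩ := h
        have hne : l ≠ [] := by
          intro hnil
          have := seqTo_length _ _ _ hl
          simp [hnil] at this
        cases l with
        | nil => exact absurd rfl hne
        | cons x l' =>
          rw [List.getLast?_cons_cons]
          exact ih _ _ hsub hl
      · simp [subAt, hi] at hsub

lemma seqTo_append_drop (p₁ : List ℕ) (d t : RT R ar) (p₂ : List ℕ) (ρ : List R)
    (hsub : subAt d p₁ = some t) (h : seqTo d (p₁ ++ p₂) = some ρ) :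
    seqTo t p₂ = some (ρ.drop p₁.length) := by
  induction p₁ generalizing d ρ with
  | nil => simp at hsub; subst hsub; simpa using h
  | cons i p₁ ih =>
    cases d with
    | node r ts =>
      by_cases hi : i < ar r
      · simp only [subAt, hi, dif_pos] at hsub
        simp only [List.cons_append, seqTo, hi, dif_pos, Option.map_eq_some_iff] at h
        obtain ⟨l, hl, rfl⟩ := h
        simpa using ih _ _ hsub hl
      · simp [subAt, hi] at hsub

lemma exists_deep_leaf (d : RT R ar) :
    ∃ p t, subAt d p = some t ∧ ar t.rootRule = 0 ∧ p.length = height d := by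
  induction d with
  | node r ts ih =>
    by_cases h0 : ar r = 0
    · refine ⟨[], node r ts, rfl, h0, ?_⟩
      have : height (node r ts) = 0 := by
        refine Nat.le_zero.mp (Finset.sup_le fun i _ => absurd i.2 (by simp [h0]))
      simp [this]
    · have hne : (Finset.univ : Finset (Fin (ar r))).Nonempty :=
        ⟨⟨0, Nat.pos_of_ne_zero h0⟩, Finset.mem_univ _⟩
      obtain ⟨i, _, hsup⟩ := Finset.exists_mem_eq_sup Finset.univ hne
        (fun i => height (ts i) + 1)
      obtain ⟨p, t, hsub, hleaf, hlen⟩ := ih i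
      refine ⟨i.1 :: p, t, ?_, hleaf, ?_⟩
      · have : (⟨i.1, i.2⟩ : Fin (ar r)) = i := Fin.eta _ _
        simp [subAt, i.2, this, hsub]
      · show p.length + 1 = height (node r ts)
        rw [show height (node r ts) = height (ts i) + 1 from hsup, hlen]

lemma height_lt_numNodes (d : RT R ar) : height d < numNodes d := by
  induction d with
  | node r ts ih =>
    show Finset.univ.sup (fun i => height (ts i) + 1) < 1 + Finset.univ.sum fun i => numNodes (ts i)
    have : Finset.univ.sup (fun i => height (ts i) + 1)
        ≤ Finset.univ.sum fun i => numNodes (ts i) := by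
      apply Finset.sup_le
      intro i _
      calc height (ts i) + 1 ≤ numNodes (ts i) := ih i
      _ ≤ _ := Finset.single_le_sum (f := fun j => numNodes (ts j))
        (fun j _ => Nat.zero_le _) (Finset.mem_univ i)
    omega

/-- The children of a tree, as a function. -/
def childrenFn : (d : RT R ar) → (Fin (ar d.rootRule) → RT R ar)
  | node _ ts => ts

lemma node_childrenFn (d : RT R ar) : d = RT.node d.rootRule (childrenFn d) := by
  cases d; rfl

lemma finite_height [Fintype R] (n : ℕ) : {d : RT R ar | height d < n}.Finite := by
  induction n with
  | zero => simp
  | succ n ihn =>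
    rw [← Set.finite_coe_iff]
    haveI : Finite {d : RT R ar // height d < n} := Set.finite_coe_iff.mpr ihn
    have hbound : ∀ d : {d : RT R ar // height d < n + 1}, ∀ i : Fin (ar d.1.rootRule),
        height (childrenFn d.1 i) < n := by
      rintro ⟨⟨r, ts⟩, hd⟩ i
      have : height (ts i) + 1 ≤ height (node r ts) :=
        Finset.le_sup (f := fun i => height (ts i) + 1) (Finset.mem_univ i)
      have hd' : height (node r ts) < n + 1 := hd
      show height (ts i) < n
      omega
    set F : {d : RT R ar // height d < n + 1} →
        Σ r : R, (Fin (ar r) → {d : RT R ar // height d < n}) :=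
      fun d => ⟨d.1.rootRule, fun i => ⟨childrenFn d.1 i, hbound d i⟩⟩ with hF
    apply Finite.of_injective F
    rintro ⟨⟨r, ts⟩, ha⟩ ⟨⟨r', ts'⟩, hb⟩ h
    simp only [hF, Sigma.mk.inj_iff] at h
    obtain ⟨rfl, h2⟩ := h
    have h2' := eq_of_heq h2
    apply Subtype.ext
    show node r ts = node r ts'
    congr 1
    funext i
    have := congrFun h2' i
    exact congrArg Subtype.val this

lemma finite_numNodes_le [Fintype R] (k : ℕ) : {d : RT R ar | numNodes d ≤ k}.Finite := by
  apply (finite_height (R := R) (ar := ar) (k + 1)).subset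
  intro d hd
  have := height_lt_numNodes d
  simp only [Set.mem_setOf_eq] at hd ⊢
  omega

end RT
set_option linter.unusedSectionVars false

/-! ### Auxiliary lemmas: the derivation-set recursion -/

section MrecLemmas

variable {N R : Type} [Fintype N] [Nonempty N] [Fintype R]
variable (lhs : R → N) (rhs : R → List N) (e : Fin (Fintype.card N) → N)

lemma mrec_zero (A : N) : Mrec (R := R) lhs rhs e 0 A = ∅ := rfl

lemma mrec_succ (n : ℕ) (A : N) :
    Mrec lhs rhs e (n + 1) A =
      if select e n = A then
        {d | ∃ (r : R) (_ : lhs r = A) (ts : Fin (rhs r).length → RT R fun r => (rhs r).length),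
          d = RT.node r ts ∧ ∀ i, ts i ∈ Mrec lhs rhs e n ((rhs r).get i)}
      else Mrec lhs rhs e n A := rfl

lemma mrec_mono_nodeform : ∀ n : ℕ,
    (∀ A, Mrec lhs rhs e n A ⊆ Mrec lhs rhs e (n + 1) A) ∧
    (∀ A x, x ∈ Mrec lhs rhs e n A →
      ∃ (r : R) (_ : lhs r = A) (ts : Fin (rhs r).length → RT R fun r => (rhs r).length),
        x = RT.node r ts ∧ ∀ i, ts i ∈ Mrec lhs rhs e n ((rhs r).get i)) := by
  intro n
  induction n with
  | zero =>
    constructor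
    · intro A x hx; exact absurd hx (by rw [mrec_zero]; exact Set.notMem_empty x)
    · intro A x hx; exact absurd hx (by rw [mrec_zero]; exact Set.notMem_empty x)
  | succ n ih =>
    obtain ⟨ihmono, ihnode⟩ := ih
    have hnode : ∀ A x, x ∈ Mrec lhs rhs e (n + 1) A →
        ∃ (r : R) (_ : lhs r = A) (ts : Fin (rhs r).length → RT R fun r => (rhs r).length),
          x = RT.node r ts ∧ ∀ i, ts i ∈ Mrec lhs rhs e (n + 1) ((rhs r).get i) := by
      intro A x hx
      rw [mrec_succ] at hx
      by_cases hsel : select e n = A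
      · rw [if_pos hsel] at hx
        obtain ⟨r, hr, ts, rfl, hts⟩ := hx
        exact ⟨r, hr, ts, rfl, fun i => ihmono _ (hts i)⟩
      · rw [if_neg hsel] at hx
        obtain ⟨r, hr, ts, rfl, hts⟩ := ihnode A _ hx
        exact ⟨r, hr, ts, rfl, fun i => ihmono _ (hts i)⟩
    refine ⟨?_, hnode⟩
    intro A x hx
    rw [mrec_succ]
    by_cases hsel : select e (n + 1) = A
    · rw [if_pos hsel]
      obtain ⟨r, hr, ts, rfl, hts⟩ := hnode A _ hx
      exact ⟨r, hr, ts, rfl, hts⟩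
    · rw [if_neg hsel]
      exact hx

lemma mrec_mono {m n : ℕ} (h : m ≤ n) (A : N) :
    Mrec (R := R) lhs rhs e m A ⊆ Mrec lhs rhs e n A := by
  induction n, h using Nat.le_induction with
  | base => exact subset_rfl
  | succ n hmn ih => exact ih.trans ((mrec_mono_nodeform lhs rhs e n).1 A)

lemma mrec_sort {n : ℕ} {A : N} {x : RT R fun r => (rhs r).length}
    (hx : x ∈ Mrec lhs rhs e n A) : lhs x.rootRule = A := by
  obtain ⟨r, hr, ts, rfl, -⟩ := (mrec_mono_nodeform lhs rhs e n).2 A x hx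
  exact hr

lemma mrec_wellSorted {n : ℕ} {A : N} {x : RT R fun r => (rhs r).length}
    (hx : x ∈ Mrec lhs rhs e n A) : WellSorted lhs rhs x := by
  induction n generalizing A x with
  | zero => exact absurd hx (by rw [mrec_zero]; exact Set.notMem_empty x)
  | succ n ih =>
    rw [mrec_succ] at hx
    by_cases hsel : select e n = A
    · rw [if_pos hsel] at hx
      obtain ⟨r, hr, ts, rfl, hts⟩ := hx
      exact WellSorted.node r ts (fun i => mrec_sort lhs rhs e (hts i)) (fun i => ih (hts i))
    · rw [if_neg hsel] at hx
      exact ih hx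

lemma mrec_subAt : ∀ (n : ℕ) (A : N) (x : RT R fun r => (rhs r).length),
    x ∈ Mrec lhs rhs e n A → ∀ (π : List ℕ) (y : RT R fun r => (rhs r).length),
      RT.subAt x π = some y → y ∈ Mrec lhs rhs e n (lhs y.rootRule) := by
  intro n
  induction n with
  | zero => intro A x hx; exact absurd hx (by rw [mrec_zero]; exact Set.notMem_empty x)
  | succ n ih =>
    intro A x hx π y hy
    cases π with
    | nil =>
      rw [RT.subAt_nil, Option.some_inj] at hy
      subst hy
      rw [mrec_sort lhs rhs e hx]
      exact hx
    | cons i π' =>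
      rw [mrec_succ] at hx
      by_cases hsel : select e n = A
      · rw [if_pos hsel] at hx
        obtain ⟨r, hr, ts, rfl, hts⟩ := hx
        by_cases hi : i < (rhs r).length
        · rw [RT.subAt_cons, dif_pos hi] at hy
          exact (mrec_mono_nodeform lhs rhs e n).1 _
            (ih _ (ts ⟨i, hi⟩) (hts ⟨i, hi⟩) π' y hy)
        · rw [RT.subAt_cons, dif_neg hi] at hy
          exact absurd hy (by simp)
      · rw [if_neg hsel] at hx
        exact (mrec_mono_nodeform lhs rhs e n).1 _ (ih A x hx (i :: π') y hy)

lemma mrec_cut : ∀ (n : ℕ) (A : N) (d : RT R fun r => (rhs r).length),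
    d ∈ Mrec lhs rhs e n A → ∀ (p : List ℕ) (t : RT R fun r => (rhs r).length)
      (q : List ℕ) (s : RT R fun r => (rhs r).length),
      RT.subAt d p = some t → RT.subAt t q = some s →
      lhs s.rootRule = lhs t.rootRule → RT.replaceAt d p s ∈ Mrec lhs rhs e n A := by
  intro n
  induction n with
  | zero => intro A d hd; exact absurd hd (by rw [mrec_zero]; exact Set.notMem_empty d)
  | succ n ih =>
    intro A d hd p t q s hp hq hsort
    rw [mrec_succ] at hd ⊢
    by_cases hsel : select e n = A
    · rw [if_pos hsel] at hd ⊢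
      obtain ⟨r, hr, ts, rfl, hts⟩ := hd
      cases p with
      | nil =>
        rw [RT.subAt_nil, Option.some_inj] at hp
        subst hp
        rw [RT.replaceAt_nil]
        cases q with
        | nil =>
          rw [RT.subAt_nil, Option.some_inj] at hq
          subst hq
          exact ⟨r, hr, ts, rfl, hts⟩
        | cons j q' =>
          -- `s` is a proper subtree of sort `A`
          have hs : s ∈ Mrec lhs rhs e (n + 1) (lhs s.rootRule) :=
            mrec_subAt lhs rhs e (n + 1) A _
              (by rw [mrec_succ, if_pos hsel]; exact ⟨r, hr, ts, rfl, hts⟩) (j :: q') s hq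
          have hsA : lhs s.rootRule = A := by
            rw [hsort]; exact hr
          rw [hsA] at hs
          rw [mrec_succ, if_pos hsel] at hs
          exact hs
      | cons i p' =>
        by_cases hi : i < (rhs r).length
        · rw [RT.subAt_cons, dif_pos hi] at hp
          refine ⟨r, hr, _, rfl, ?_⟩
          intro j
          by_cases hj : j.1 = i
          · have hj' : j = ⟨i, hi⟩ := Fin.ext hj
            subst hj'
            simp only [if_pos rfl]
            exact ih _ _ (hts ⟨i, hi⟩) p' t q s hp hq hsort
          · simp only [if_neg hj]
            exact hts j
        · rw [RT.subAt_cons, dif_neg hi] at hp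
          exact absurd hp (by simp)
    · rw [if_neg hsel] at hd ⊢
      exact ih A d hd p t q s hp hq hsort

lemma mrec_height {n : ℕ} {A : N} {x : RT R fun r => (rhs r).length}
    (hx : x ∈ Mrec lhs rhs e n A) : RT.height x < n := by
  induction n generalizing A x with
  | zero => exact absurd hx (by rw [mrec_zero]; exact Set.notMem_empty x)
  | succ n ih =>
    rw [mrec_succ] at hx
    by_cases hsel : select e n = A
    · rw [if_pos hsel] at hx
      obtain ⟨r, hr, ts, rfl, hts⟩ := hx
      show Finset.univ.sup (fun i => RT.height (ts i) + 1) < n + 1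
      exact Nat.lt_succ_of_le (Finset.sup_le fun i _ => ih (hts i))
    · rw [if_neg hsel] at hx
      exact Nat.lt_succ_of_lt (ih hx)

lemma mrec_finite (n : ℕ) (A : N) : (Mrec (R := R) lhs rhs e n A).Finite :=
  (RT.finite_height n).subset fun _ hx => mrec_height lhs rhs e hx

lemma mrec_cover (he : Function.Bijective e) :
    ∀ (h : ℕ) (A : N) (d : RT R fun r => (rhs r).length), WellSorted lhs rhs d →
      lhs d.rootRule = A → RT.height d < h → d ∈ Mrec lhs rhs e (Fintype.card N * h) A := by
  intro h
  induction h with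
  | zero => intro A d _ _ hh; exact absurd hh (by omega)
  | succ h ih =>
    intro A d hws hsort hh
    cases d with
    | node r ts =>
      cases hws with
      | node _ _ hsorts hrec =>
        have hts : ∀ i, ts i ∈ Mrec lhs rhs e (Fintype.card N * h) ((rhs r).get i) := by
          intro i
          apply ih _ _ (hrec i) (hsorts i)
          have h1 : RT.height (ts i) + 1 ≤ Finset.univ.sup (fun i => RT.height (ts i) + 1) :=
            Finset.le_sup (f := fun i => RT.height (ts i) + 1) (Finset.mem_univ i)
          have h2 : Finset.univ.sup (fun i => RT.height (ts i) + 1) < h + 1 := hh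
          omega
        obtain ⟨j, hj⟩ := he.surjective A
        set m := Fintype.card N * h + j.1 with hm
        have hsel : select e m = A := by
          have hmod : m % Fintype.card N = j.1 := by
            rw [hm, Nat.mul_add_mod]
            exact Nat.mod_eq_of_lt j.2
          show e ⟨m % Fintype.card N, _⟩ = A
          rw [← hj]
          congr 1
          exact Fin.ext hmod
        have hmem : RT.node r ts ∈ Mrec lhs rhs e (m + 1) A := by
          rw [mrec_succ, if_pos hsel]
          exact ⟨r, hsort, ts, rfl, fun i => mrec_mono lhs rhs e (Nat.le_add_right _ _) _ (hts i)⟩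
        have hle : m + 1 ≤ Fintype.card N * (h + 1) := by
          have := j.2
          rw [hm, Nat.mul_succ]
          omega
        exact mrec_mono lhs rhs e hle A hmem

end MrecLemmas
/-! ### Auxiliary lemmas: distributive operations -/

section Algebra

variable {K : Type} [AddCommMonoid K]

/-- The two distributivity properties of a single operation. -/
def DOp {n : ℕ} (ω : (Fin n → K) → K) : Prop :=
  (∀ (x : Fin n → K) (i : Fin n) (a b : K),
    ω (Function.update x i (a + b)) =
      ω (Function.update x i a) + ω (Function.update x i b)) ∧
  (∀ x : Fin n → K, (∃ i, x i = 0) → ω x = 0)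

lemma DOp.update_sum {n : ℕ} {ω : (Fin n → K) → K} (h : DOp ω) {τ : Type} (S : Finset τ)
    (g : τ → K) (x : Fin n → K) (i : Fin n) :
    ω (Function.update x i (∑ t ∈ S, g t)) = ∑ t ∈ S, ω (Function.update x i (g t)) := by
  classical
  induction S using Finset.induction with
  | empty =>
    rw [Finset.sum_empty, Finset.sum_empty]
    exact h.2 _ ⟨i, Function.update_self _ _ _⟩
  | insert _ _ hmem ih =>
    rw [Finset.sum_insert hmem, Finset.sum_insert hmem, h.1, ih]

lemma DOp.cons {n : ℕ} {ω : (Fin (n + 1) → K) → K} (h : DOp ω) (c : K) :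
    DOp (fun x : Fin n → K => ω (Fin.cons c x)) := by
  constructor
  · intro x i a b
    simp only [Fin.cons_update]
    exact h.1 _ _ _ _
  · rintro x ⟨i, hi⟩
    exact h.2 _ ⟨i.succ, by simpa using hi⟩

lemma DOp.sum_comm {τ : Type} : ∀ (n : ℕ) (ω : (Fin n → K) → K), DOp ω →
    ∀ (S : Fin n → Finset τ) (g : Fin n → τ → K),
    ω (fun i => ∑ t ∈ S i, g i t) = ∑ f ∈ Fintype.piFinset S, ω (fun i => g i (f i)) := by
  intro n
  induction n with
  | zero =>
    intro ω h S g
    have hpi : Fintype.piFinset S = {fun i : Fin 0 => i.elim0} := by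
      apply Finset.eq_singleton_iff_unique_mem.mpr
      constructor
      · exact Fintype.mem_piFinset.mpr (fun i => i.elim0)
      · intro f _; funext i; exact i.elim0
    rw [hpi, Finset.sum_singleton]
    congr 1
    funext i
    exact i.elim0
  | succ n ihn =>
    intro ω h S g
    have e1 : (fun i => ∑ t ∈ S i, g i t) =
        Fin.cons (∑ t ∈ S 0, g 0 t) (fun i : Fin n => ∑ t ∈ S i.succ, g i.succ t) := by
      funext i
      refine Fin.cases ?_ ?_ i <;> simp
    have e2 : ((Fin.cons (∑ t ∈ S 0, g 0 t) fun i : Fin n => ∑ t ∈ S i.succ, g i.succ t) :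
          Fin (n + 1) → K)
        = Function.update
            ((Fin.cons (0 : K) fun i : Fin n => ∑ t ∈ S i.succ, g i.succ t) : Fin (n + 1) → K) 0
            (∑ t ∈ S 0, g 0 t) := by
      rw [Fin.update_cons_zero]
    rw [e1, e2, h.update_sum]
    have e3 : ∀ t, ω (Function.update
          (Fin.cons 0 fun i : Fin n => ∑ t ∈ S i.succ, g i.succ t) 0 (g 0 t)) =
        ∑ f ∈ Fintype.piFinset (fun i : Fin n => S i.succ),
          ω (Fin.cons (g 0 t) (fun i => g i.succ (f i))) := by
      intro t
      rw [Fin.update_cons_zero]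
      exact ihn _ (h.cons (g 0 t)) (fun i => S i.succ) (fun i => g i.succ)
    rw [Finset.sum_congr rfl fun t _ => e3 t, ← Finset.sum_product']
    refine Finset.sum_nbij' (fun x => Fin.cons x.1 x.2) (fun f => (f 0, Fin.tail f))
      ?_ ?_ ?_ ?_ ?_
    · rintro ⟨t, f⟩ hx
      rw [Finset.mem_product] at hx
      rw [Fintype.mem_piFinset]
      intro i
      refine Fin.cases ?_ ?_ i
      · simpa using hx.1
      · intro j
        simp only [Fin.cons_succ]
        exact Fintype.mem_piFinset.mp hx.2 j
    · intro f hf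
      rw [Fintype.mem_piFinset] at hf
      rw [Finset.mem_product]
      exact ⟨hf 0, Fintype.mem_piFinset.mpr fun j => hf j.succ⟩
    · rintro ⟨t, f⟩ _
      simp [Fin.tail_cons]
    · intro f _
      exact Fin.cons_self_tail f
    · rintro ⟨t, f⟩ _
      congr 1
      funext i
      refine Fin.cases ?_ ?_ i <;> simp [Fin.cons_succ]

end Algebra
/-! ### Context evaluation and the characterization of `Vrec` by derivation sets -/

section Ctx

variable {K : Type} [AddCommMonoid K] {R : Type} {ar : R → ℕ}
variable (wt : ∀ r : R, (Fin (ar r) → K) → K)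

/-- Evaluate a tree in which the subtree at position `p` has been replaced by a value. -/
noncomputable def ctxval : RT R ar → List ℕ → K → K
  | _, [], k => k
  | RT.node r ts, i :: p, k =>
      if h : i < ar r then
        wt r (fun j => if j.1 = i then ctxval (ts ⟨i, h⟩) p k else wtval wt (ts j))
      else 0

@[simp] lemma ctxval_nil (d : RT R ar) (k : K) : ctxval wt d [] k = k := by cases d; rfl

lemma ctxval_cons (r : R) (ts : Fin (ar r) → RT R ar) (i : ℕ) (p : List ℕ) (k : K) :
    ctxval wt (RT.node r ts) (i :: p) k =
      if h : i < ar r then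
        wt r (fun j => if j.1 = i then ctxval wt (ts ⟨i, h⟩) p k else wtval wt (ts j))
      else 0 := rfl

lemma wtval_node (r : R) (ts : Fin (ar r) → RT R ar) :
    wtval wt (RT.node r ts) = wt r (fun i => wtval wt (ts i)) := rfl

lemma ite_eq_update (r : R) (ts : Fin (ar r) → RT R ar) (i : ℕ) (hi : i < ar r) (z : K) :
    (fun j => if j.1 = i then z else wtval wt (ts j)) =
      Function.update (fun j => wtval wt (ts j)) ⟨i, hi⟩ z := by
  funext j
  rw [Function.update_apply]
  by_cases hj : j.1 = i
  · rw [if_pos hj, if_pos (Fin.ext hj)]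
  · rw [if_neg hj, if_neg (fun h => hj (by rw [h]))]

lemma ctxval_replaceAt : ∀ (p : List ℕ) (d t s : RT R ar), RT.subAt d p = some t →
    wtval wt (RT.replaceAt d p s) = ctxval wt d p (wtval wt s) := by
  intro p
  induction p with
  | nil => intro d t s _; rw [RT.replaceAt_nil, ctxval_nil]
  | cons i p ih =>
    intro d t s hp
    cases d with
    | node r ts =>
      by_cases hi : i < ar r
      · rw [RT.subAt_cons, dif_pos hi] at hp
        show wt r _ = _
        rw [ctxval_cons, dif_pos hi]
        congr 1
        funext j
        by_cases hj : j.1 = i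
        · have hj' : j = ⟨i, hi⟩ := Fin.ext hj
          subst hj'
          simp only [if_pos rfl]
          exact ih _ t s hp
        · simp only [if_neg hj]
      · rw [RT.subAt_cons, dif_neg hi] at hp
        exact absurd hp (by simp)

lemma ctxval_zero (hD : ∀ r : R, DOp (wt r)) : ∀ (p : List ℕ) (d t : RT R ar), RT.subAt d p = some t →
    ctxval wt d p 0 = 0 := by
  intro p
  induction p with
  | nil => intro d t _; rw [ctxval_nil]
  | cons i p ih =>
    intro d t hp
    cases d with
    | node r ts =>
      by_cases hi : i < ar r
      · rw [RT.subAt_cons, dif_pos hi] at hp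
        rw [ctxval_cons, dif_pos hi]
        apply (hD r).2
        exact ⟨⟨i, hi⟩, by simp only [if_pos rfl]; exact ih _ _ hp⟩
      · rw [RT.subAt_cons, dif_neg hi] at hp
        exact absurd hp (by simp)

lemma ctxval_add (hD : ∀ r : R, DOp (wt r)) : ∀ (p : List ℕ) (d t : RT R ar), RT.subAt d p = some t → ∀ a b : K,
    ctxval wt d p (a + b) = ctxval wt d p a + ctxval wt d p b := by
  intro p
  induction p with
  | nil => intro d t _ a b; simp
  | cons i p ih =>
    intro d t hp a b
    cases d with
    | node r ts =>
      by_cases hi : i < ar r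
      · rw [RT.subAt_cons, dif_pos hi] at hp
        rw [ctxval_cons, dif_pos hi, ctxval_cons, dif_pos hi, ctxval_cons, dif_pos hi]
        rw [ite_eq_update (hi := hi), ite_eq_update (hi := hi), ite_eq_update (hi := hi),
          ih _ _ hp a b]
        exact (hD r).1 _ _ _ _
      · rw [RT.subAt_cons, dif_neg hi] at hp
        exact absurd hp (by simp)

lemma ctxval_sum (hD : ∀ r : R, DOp (wt r)) {τ : Type} (S : Finset τ) (g : τ → K) (p : List ℕ) (d t : RT R ar)
    (hp : RT.subAt d p = some t) :
    ctxval wt d p (∑ x ∈ S, g x) = ∑ x ∈ S, ctxval wt d p (g x) := by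
  classical
  induction S using Finset.induction with
  | empty => simpa using ctxval_zero wt hD p d t hp
  | insert _ _ hmem ih =>
    rw [Finset.sum_insert hmem, Finset.sum_insert hmem, ctxval_add wt hD p d t hp, ih]

end Ctx

/-! ### `Vrec` as a sum of tree weights -/

section VrecSum

variable {K : Type} [AddCommMonoid K] {N R : Type} [Fintype N] [Nonempty N] [Fintype R]
variable (lhs : R → N) (rhs : R → List N)
variable (wt : ∀ r : R, (Fin (rhs r).length → K) → K)
variable (e : Fin (Fintype.card N) → N)

lemma vrec_eq_sum (hD : ∀ r : R, DOp (wt r)) (n : ℕ) (A : N) :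
    Vrec lhs rhs wt e n A = ∑ d ∈ (mrec_finite lhs rhs e n A).toFinset, wtval wt d := by
  induction n generalizing A with
  | zero =>
    show (0 : K) = _
    have hemp : (mrec_finite lhs rhs e 0 A).toFinset = ∅ := by
      rw [Set.Finite.toFinset_eq_empty]
      exact mrec_zero lhs rhs e A
    rw [hemp, Finset.sum_empty]
  | succ n ih =>
    by_cases hsel : select e n = A
    · show (if select e n = A then _ else _) = _
      rw [if_pos hsel]
      have hset : {r : R | lhs r = A} =
          ↑(Finset.univ.filter (fun r : R => lhs r = A)) := by ext; simp
      rw [hset, finsum_mem_coe_finset]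
      have hstep : ∀ r : R, lhs r = A →
          (wt r fun i => Vrec lhs rhs wt e n ((rhs r).get i)) =
          ∑ f ∈ Fintype.piFinset
              (fun i => (mrec_finite lhs rhs e n ((rhs r).get i)).toFinset),
            wtval wt (RT.node r f) := by
        intro r _
        have : (fun i => Vrec lhs rhs wt e n ((rhs r).get i)) =
            fun i => ∑ d ∈ (mrec_finite lhs rhs e n ((rhs r).get i)).toFinset, wtval wt d :=
          funext fun i => ih _
        rw [this]
        exact DOp.sum_comm _ (wt r) (hD r) _ _
      rw [Finset.sum_congr rfl fun r hr => hstep r (by simpa using hr)]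
      rw [Finset.sum_sigma']
      refine Finset.sum_nbij' (fun x => RT.node x.1 x.2)
        (fun d => ⟨d.rootRule, RT.childrenFn d⟩) ?_ ?_ ?_ ?_ ?_
      · rintro ⟨r, f⟩ hx
        rw [Finset.mem_sigma] at hx
        rw [Set.Finite.mem_toFinset, mrec_succ, if_pos hsel]
        refine ⟨r, by simpa using hx.1, f, rfl, ?_⟩
        intro i
        have := Fintype.mem_piFinset.mp hx.2 i
        rwa [Set.Finite.mem_toFinset] at this
      · intro d hd
        rw [Set.Finite.mem_toFinset, mrec_succ, if_pos hsel] at hd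
        obtain ⟨r, hr, ts, rfl, hts⟩ := hd
        rw [Finset.mem_sigma]
        constructor
        · exact Finset.mem_filter.mpr ⟨Finset.mem_univ _, hr⟩
        · exact Fintype.mem_piFinset.mpr fun i => (Set.Finite.mem_toFinset _).mpr (hts i)
      · rintro ⟨r, f⟩ _; rfl
      · intro d _; exact (RT.node_childrenFn d).symm
      · rintro ⟨r, f⟩ _; rfl
    · show (if select e n = A then _ else _) = _
      rw [if_neg hsel, ih A]
      apply Finset.sum_congr _ fun _ _ => rfl
      ext x
      rw [Set.Finite.mem_toFinset, Set.Finite.mem_toFinset, mrec_succ, if_neg hsel]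

end VrecSum
/-! ### Combinatorics of elementary cycles in label sequences -/

section Combinatorics

variable {R : Type}

lemma exists_dup_split : ∀ (τ : List R), ¬ τ.Nodup →
    ∃ (a : List R) (x : R) (b c : List R), τ = a ++ x :: b ++ x :: c ∧ (a ++ x :: b).Nodup := by
  intro τ
  induction τ with
  | nil => intro h; exact absurd List.nodup_nil h
  | cons y τ' ih =>
    intro h
    by_cases hnd : τ'.Nodup
    · have hy : y ∈ τ' := by
        by_contra hy
        exact h (List.nodup_cons.mpr ⟨hy, hnd⟩)
      obtain ⟨b, c, rfl⟩ := List.append_of_mem hy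
      have hb : y ∉ b := by
        intro hyb
        have := List.nodup_append.mp hnd
        exact this.2.2 y hyb y List.mem_cons_self rfl
      refine ⟨[], y, b, c, by simp, ?_⟩
      simp only [List.nil_append, List.nodup_cons]
      exact ⟨hb, (List.nodup_append.mp hnd).1⟩
    · obtain ⟨a, x, b, c, rfl, hnd2⟩ := ih hnd
      by_cases hy : y ∈ a ++ x :: b
      · obtain ⟨b₁, c₁, he⟩ := List.append_of_mem hy
        have hyb₁ : y ∉ b₁ := by
          intro hyb
          rw [he] at hnd2
          exact (List.nodup_append.mp hnd2).2.2 y hyb y List.mem_cons_self rfl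
        refine ⟨[], y, b₁, c₁ ++ x :: c, ?_, ?_⟩
        · have : a ++ x :: b ++ x :: c = (b₁ ++ y :: c₁) ++ x :: c := by rw [← he]
          simp only [List.cons_append, List.nil_append]
          rw [this]
          simp [List.append_assoc]
        · simp only [List.nil_append, List.nodup_cons]
          constructor
          · exact hyb₁
          · rw [he] at hnd2
            exact (List.nodup_append.mp hnd2).1
      · refine ⟨y :: a, x, b, c, by simp, ?_⟩
        rw [List.cons_append, List.nodup_cons]
        exact ⟨by simpa using hy, hnd2⟩

lemma exists_elementaryCycle_infix [Fintype R] (σ : List R)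
    (h : Fintype.card R < σ.length) :
    ∃ w, ElementaryCycle w ∧ w <:+: σ ∧ w.length ≤ Fintype.card R + 1 := by
  set τ := σ.take (Fintype.card R + 1) with hτ
  have hlen : τ.length = Fintype.card R + 1 := by
    rw [hτ, List.length_take]
    omega
  have hnd : ¬ τ.Nodup := by
    intro hnd
    have := hnd.length_le_card
    omega
  obtain ⟨a, x, b, c, hsplit, hnd2⟩ := exists_dup_split τ hnd
  refine ⟨x :: (b ++ [x]), ⟨?_, ?_, ?_, ?_⟩, ?_, ?_⟩
  · simp
  · show some x = _
    have : x :: (b ++ [x]) = (x :: b) ++ [x] := by simp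
    rw [this, List.getLast?_concat]
  · have : x :: (b ++ [x]) = (x :: b) ++ [x] := by simp
    rw [this, List.dropLast_concat]
    exact (List.nodup_append.mp hnd2).2.1
  · show (b ++ [x]).Nodup
    have hxb : (x :: b).Nodup := (List.nodup_append.mp hnd2).2.1
    rw [List.nodup_cons] at hxb
    rw [List.nodup_append]
    refine ⟨hxb.2, List.nodup_singleton x, ?_⟩
    intro z hz z' hz' hzz
    rw [List.mem_singleton] at hz'
    subst hz'
    subst hzz
    exact hxb.1 hz
  · have hinf : (x :: (b ++ [x])) <:+: τ := by
      refine ⟨a, c, ?_⟩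
      rw [hsplit]
      simp [List.append_assoc]
    exact hinf.trans ((List.take_prefix _ _).isInfix)
  · have hinf : (x :: (b ++ [x])) <:+: τ := by
      refine ⟨a, c, ?_⟩
      rw [hsplit]
      simp [List.append_assoc]
    calc (x :: (b ++ [x])).length ≤ τ.length := hinf.length_le
    _ = Fintype.card R + 1 := hlen

/-- `σ` contains (at least) `m` pairwise disjoint occurrences of `w`. -/
def HasDisj (w : List R) : ℕ → List R → Prop
  | 0, _ => True
  | m + 1, σ => ∃ α β, σ = α ++ w ++ β ∧ HasDisj w m β

lemma hasDisj_zero (w σ : List R) : HasDisj w 0 σ := trivial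

lemma hasDisj_prepend {w : List R} {m : ℕ} {β : List R} (h : HasDisj w m β) (α : List R) :
    HasDisj w m (α ++ β) := by
  cases m with
  | zero => trivial
  | succ m =>
    obtain ⟨α', β', rfl, h'⟩ := h
    exact ⟨α ++ α', β', by simp [List.append_assoc], h'⟩

lemma hasDisj_pred {w : List R} : ∀ {m : ℕ} {σ : List R}, HasDisj w (m + 1) σ → HasDisj w m σ := by
  intro m
  induction m with
  | zero => intro σ _; trivial
  | succ m ih =>
    intro σ h
    obtain ⟨α, β, rfl, h'⟩ := h
    exact ⟨α, β, rfl, ih h'⟩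

lemma hasDisj_mono {w : List R} {m m' : ℕ} (h : m' ≤ m) {σ : List R} (hd : HasDisj w m σ) :
    HasDisj w m' σ := by
  induction m, h using Nat.le_induction with
  | base => exact hd
  | succ m _ ih => exact ih (hasDisj_pred hd)

lemma hasDisj_length {w : List R} (hw : w ≠ []) :
    ∀ (m : ℕ) {σ : List R}, HasDisj w m σ → m ≤ σ.length := by
  intro m
  induction m with
  | zero => intro σ _; exact Nat.zero_le _
  | succ m ih =>
    rintro σ ⟨α, β, rfl, h⟩
    have := ih h
    have hw1 : 1 ≤ w.length := by
      cases w with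
      | nil => exact absurd rfl hw
      | cons a l => simp
    simp only [List.length_append]
    omega

lemma hasDisj_tail {w : List R} (hw : w ≠ []) {m : ℕ} {x : R} {τ : List R}
    (h : HasDisj w (m + 1) (x :: τ)) : HasDisj w m τ := by
  obtain ⟨α, β, heq, h'⟩ := h
  cases α with
  | nil =>
    cases w with
    | nil => exact absurd rfl hw
    | cons w₀ w' =>
      simp only [List.nil_append, List.cons_append, List.cons.injEq] at heq
      rw [heq.2]
      exact hasDisj_prepend h' w'
  | cons a α' =>
    simp only [List.cons_append, List.cons.injEq] at heq
    rw [heq.2]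
    exact hasDisj_pred ⟨α', β, rfl, h'⟩

/-- The maximal number of disjoint occurrences of `w` in `σ`. -/
noncomputable def gdcount (w σ : List R) : ℕ :=
  Nat.findGreatest (fun m => HasDisj w m σ) σ.length

lemma gdcount_spec (w σ : List R) : HasDisj w (gdcount w σ) σ :=
  Nat.findGreatest_spec (P := fun m => HasDisj w m σ) (m := 0) (Nat.zero_le _)
    (hasDisj_zero w σ)

lemma le_gdcount {w σ : List R} (hw : w ≠ []) {m : ℕ} (h : HasDisj w m σ) :
    m ≤ gdcount w σ :=
  Nat.le_findGreatest (hasDisj_length hw m h) h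

lemma not_hasDisj_gdcount_succ {w σ : List R} (hw : w ≠ []) :
    ¬ HasDisj w (gdcount w σ + 1) σ := by
  intro h
  have := le_gdcount hw h
  omega

lemma gdcount_nil (w : List R) : gdcount w [] = 0 := rfl

lemma gdcount_cons_le {w : List R} (hw : w ≠ []) (x : R) (τ : List R) :
    gdcount w (x :: τ) ≤ gdcount w τ + 1 := by
  rcases h : gdcount w (x :: τ) with _ | m
  · omega
  · have hd := gdcount_spec w (x :: τ)
    rw [h] at hd
    have := le_gdcount hw (hasDisj_tail hw hd)
    omega

lemma exists_drop_gdcount_eq {w : List R} (hw : w ≠ []) (ρ : List R) (v : ℕ)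
    (hv : v ≤ gdcount w ρ) : ∃ j, j ≤ ρ.length ∧ gdcount w (ρ.drop j) = v := by
  have hex : ∃ j, gdcount w (ρ.drop j) ≤ v := by
    refine ⟨ρ.length, ?_⟩
    rw [List.drop_length, gdcount_nil]
    exact Nat.zero_le _
  set j₀ := Nat.find hex with hj₀
  have hle : gdcount w (ρ.drop j₀) ≤ v := Nat.find_spec hex
  have hj₀le : j₀ ≤ ρ.length := Nat.find_min' hex (by rw [List.drop_length, gdcount_nil]; omega)
  refine ⟨j₀, hj₀le, ?_⟩
  rcases Nat.eq_zero_or_pos j₀ with h0 | hpos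
  · rw [h0]
    rw [h0] at hle
    simp only [List.drop_zero] at hle ⊢
    omega
  · have hprev : ¬ gdcount w (ρ.drop (j₀ - 1)) ≤ v := Nat.find_min hex (by omega)
    cases hdrop : ρ.drop (j₀ - 1) with
    | nil => rw [hdrop, gdcount_nil] at hprev; omega
    | cons x τ =>
      have hτ : τ = ρ.drop j₀ := by
        have h1 : List.drop 1 (ρ.drop (j₀ - 1)) = ρ.drop j₀ := by
          rw [List.drop_drop]
          first
          | rfl
          | (congr 1; omega)
        rw [hdrop] at h1
        simpa using h1
      have := gdcount_cons_le hw x τ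
      rw [← hdrop, hτ] at *
      rw [hdrop] at hprev
      rw [hτ] at this
      omega

lemma hasDisj_decomp {w : List R} (hw : w ≠ []) :
    ∀ (m : ℕ) (σ : List R), HasDisj w m σ → ¬ HasDisj w (m + 1) σ →
    ∃ v : ℕ → List R,
      σ = v 0 ++ ((List.range m).map fun i => w ++ v (i + 1)).flatten ∧
      ∀ i ≤ m, ¬ w <:+: v i := by
  intro m
  induction m with
  | zero =>
    intro σ _ hnot
    refine ⟨fun _ => σ, by simp, ?_⟩
    intro i hi
    interval_cases i
    rintro ⟨s, t, hst⟩
    exact hnot ⟨s, t, hst.symm, trivial⟩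
  | succ m ih =>
    intro σ h hnot
    have hP : ∃ l, ∃ α β, α.length = l ∧ σ = α ++ w ++ β ∧ HasDisj w m β := by
      obtain ⟨α, β, rfl, h'⟩ := h
      exact ⟨α.length, α, β, rfl, rfl, h'⟩
    obtain ⟨α, β, hlen, rfl, hβ⟩ := Nat.find_spec hP
    have hβnot : ¬ HasDisj w (m + 1) β := fun hb => hnot ⟨α, β, rfl, hb⟩
    obtain ⟨v', hv'eq, hv'free⟩ := ih β hβ hβnot
    have hαfree : ¬ w <:+: α := by
      rintro ⟨s, t, hst⟩
      have hlt : s.length < Nat.find hP := by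
        rw [← hlen, ← hst]
        have hw1 : 1 ≤ w.length := by
          cases w with
          | nil => exact absurd rfl hw
          | cons a l => simp
        simp only [List.length_append]
        omega
      refine Nat.find_min hP hlt ⟨s, t ++ w ++ β, rfl, ?_, ?_⟩
      · rw [← hst]
        simp [List.append_assoc]
      · have := hasDisj_prepend (hasDisj_prepend hβ w) t
        rwa [← List.append_assoc] at this
    refine ⟨fun i => match i with | 0 => α | i + 1 => v' i, ?_, ?_⟩
    · show α ++ w ++ β = α ++ _
      rw [hv'eq, List.range_succ_eq_map]
      simp [List.map_map, Function.comp_def, List.append_assoc]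
    · intro i hi
      match i with
      | 0 => exact hαfree
      | i + 1 => exact hv'free i (by omega)

end Combinatorics
/-! ### Every long sequence has a suffix with an exact number of cycle occurrences -/

section Needle

variable {R : Type}

lemma blocks_hasDisj (w : List R) (hw : w ≠ []) (L : ℕ) (ρ : List R) :
    ∀ (n : ℕ) (s : Finset ℕ), s.card = n →
      (∀ m ∈ s, w <:+: ((ρ.drop (m * L)).take L)) →
      ∀ j, (∀ m ∈ s, j ≤ m * L) → HasDisj w n (ρ.drop j) := by
  intro n
  induction n with
  | zero => intro s _ _ j _; trivial
  | succ n ih =>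
    intro s hcard hblocks j hj
    have hne : s.Nonempty := Finset.card_pos.mp (by omega)
    set m₀ := s.min' hne with hm₀
    have hm₀s : m₀ ∈ s := s.min'_mem hne
    obtain ⟨α, β, hαβ⟩ := hblocks m₀ hm₀s
    have hLd : List.drop L (ρ.drop (m₀ * L)) = ρ.drop (m₀ * L + L) := by
      rw [List.drop_drop]
      all_goals (congr 1; omega)
    have hdec : ρ.drop (m₀ * L) = α ++ w ++ (β ++ ρ.drop (m₀ * L + L)) := by
      conv_lhs => rw [← List.take_append_drop L (ρ.drop (m₀ * L))]
      rw [← hαβ, hLd]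
      simp [List.append_assoc]
    have hrest : HasDisj w n (β ++ ρ.drop (m₀ * L + L)) := by
      have hcard' : (s.erase m₀).card = n := by
        rw [Finset.card_erase_of_mem hm₀s, hcard]
        omega
      have hblocks' : ∀ m ∈ s.erase m₀, w <:+: ((ρ.drop (m * L)).take L) :=
        fun m hm => hblocks m (Finset.mem_of_mem_erase hm)
      have hj' : ∀ m ∈ s.erase m₀, m₀ * L + L ≤ m * L := by
        intro m hm
        have hms : m ∈ s := Finset.mem_of_mem_erase hm
        have hne' : m ≠ m₀ := Finset.ne_of_mem_erase hm
        have : m₀ < m := lt_of_le_of_ne (s.min'_le m hms) (Ne.symm hne')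
        calc m₀ * L + L = (m₀ + 1) * L := (Nat.succ_mul _ _).symm
        _ ≤ m * L := Nat.mul_le_mul_right L (by omega)
      exact hasDisj_prepend (ih (s.erase m₀) hcard' hblocks' _ hj') β
    have hjm : j ≤ m₀ * L := hj m₀ hm₀s
    have hdd : List.drop (m₀ * L - j) (ρ.drop j) = ρ.drop (m₀ * L) := by
      rw [List.drop_drop]
      all_goals (congr 1; omega)
    have hdrop : ρ.drop j = (List.take (m₀ * L - j) (ρ.drop j)) ++ ρ.drop (m₀ * L) := by
      conv_lhs => rw [← List.take_append_drop (m₀ * L - j) (ρ.drop j)]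
      rw [hdd]
    rw [hdrop, hdec]
    refine ⟨List.take (m₀ * L - j) (ρ.drop j) ++ α, β ++ ρ.drop (m₀ * L + L), ?_, hrest⟩
    simp [List.append_assoc]

variable [Fintype R]

/-- The set of elementary cycles of length at most `Fintype.card R + 1`. -/
noncomputable def cycW (R : Type) [Fintype R] : Finset (List R) :=
  ((List.finite_length_le R (Fintype.card R + 1)).toFinset).filter ElementaryCycle

/-- Height bound above which a tree necessarily has a `(c+1, w)`-cyclic leaf
(after passing to a subtree). -/
noncomputable def cycBound (R : Type) [Fintype R] (c : ℕ) : ℕ :=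
  ((c + 1) * (cycW R).card + 1) * (Fintype.card R + 1)

lemma exists_exact_cyclic_suffix (c : ℕ) (ρ : List R) (hlen : cycBound R c ≤ ρ.length) :
    ∃ w j, ElementaryCycle w ∧ j + 1 ≤ ρ.length ∧ CWCyclic (c + 1) w (ρ.drop j) := by
  set L := Fintype.card R + 1 with hL
  set M := (c + 1) * (cycW R).card + 1 with hM
  have hML : M * L ≤ ρ.length := hlen
  have hblocks : ∀ m, m < M →
      ∃ w, ElementaryCycle w ∧ w <:+: ((ρ.drop (m * L)).take L) ∧ w.length ≤ L := by
    intro m hm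
    apply exists_elementaryCycle_infix
    have h1 : (m + 1) * L ≤ M * L := Nat.mul_le_mul_right L (by omega)
    have h2 : m * L + L ≤ ρ.length := by
      calc m * L + L = (m + 1) * L := (Nat.succ_mul _ _).symm
      _ ≤ M * L := h1
      _ ≤ ρ.length := hML
    rw [List.length_take, List.length_drop]
    omega
  set f : ℕ → List R := fun m => if h : m < M then (hblocks m h).choose else [] with hf
  have hmaps : ∀ m ∈ Finset.range M, f m ∈ cycW R := by
    intro m hm
    rw [Finset.mem_range] at hm
    rw [hf]
    simp only [dif_pos hm]
    obtain ⟨h1, h2, h3⟩ := (hblocks m hm).choose_spec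
    rw [cycW, Finset.mem_filter, Set.Finite.mem_toFinset]
    exact ⟨h3, h1⟩
  have hcardlt : (cycW R).card * (c + 1) < (Finset.range M).card := by
    rw [Finset.card_range, hM, Nat.mul_comm]
    omega
  obtain ⟨w, hwW, hfib⟩ :=
    Finset.exists_lt_card_fiber_of_mul_lt_card_of_maps_to hmaps hcardlt
  have helem : ElementaryCycle w := (Finset.mem_filter.mp hwW).2
  have hwne : w ≠ [] := by
    intro h
    rw [h] at helem
    have := helem.1
    simp at this
  set s' := (Finset.range M).filter (fun m => f m = w) with hs'
  have hs'blocks : ∀ m ∈ s', w <:+: ((ρ.drop (m * L)).take L) := by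
    intro m hm
    rw [hs', Finset.mem_filter, Finset.mem_range] at hm
    obtain ⟨hmM, hfm⟩ := hm
    have := (hblocks m hmM).choose_spec.2.1
    rw [hf] at hfm
    simp only [dif_pos hmM] at hfm
    rwa [hfm] at this
  have hd : HasDisj w s'.card (ρ.drop 0) :=
    blocks_hasDisj w hwne L ρ s'.card s' rfl hs'blocks 0 (fun m _ => Nat.zero_le _)
  rw [List.drop_zero] at hd
  have hd2 : HasDisj w (c + 2) ρ := hasDisj_mono (by omega) hd
  have hgd : c + 2 ≤ gdcount w ρ := le_gdcount hwne hd2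
  obtain ⟨j, hjle, hjv⟩ := exists_drop_gdcount_eq hwne ρ (c + 1) (by omega)
  have hne2 : ρ.drop j ≠ [] := by
    intro h
    rw [h, gdcount_nil] at hjv
    omega
  have hjlt : j + 1 ≤ ρ.length := by
    have h1 : (ρ.drop j).length = ρ.length - j := List.length_drop
    have h2 : 0 < (ρ.drop j).length := List.length_pos_iff.mpr hne2
    omega
  have hspec := gdcount_spec w (ρ.drop j)
  rw [hjv] at hspec
  have hnot := not_hasDisj_gdcount_succ (σ := ρ.drop j) hwne
  rw [hjv] at hnot
  obtain ⟨v, hveq, hvfree⟩ := hasDisj_decomp hwne (c + 1) (ρ.drop j) hspec hnot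
  exact ⟨w, j, helem, hjlt, helem, v, hveq, hvfree⟩

lemma tall_tree_cyclic {ar : R → ℕ} (c : ℕ) (d : RT R ar)
    (hh : cycBound R c ≤ RT.height d) :
    ∃ (p₁ p₂ : List ℕ) (t : RT R ar) (w : List R),
      RT.subAt d p₁ = some t ∧ ElementaryCycle w ∧ LeafCW (c + 1) w t p₂ := by
  obtain ⟨p, t0, hsub, hleaf, hplen⟩ := RT.exists_deep_leaf d
  obtain ⟨ρ, hρ⟩ := RT.seqTo_isSome_of_subAt p d t0 hsub
  have hρlen : ρ.length = p.length + 1 := RT.seqTo_length _ _ _ hρ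
  have hlen : cycBound R c ≤ ρ.length := by omega
  obtain ⟨w, j, helem, hjlt, hcw⟩ := exists_exact_cyclic_suffix c ρ hlen
  have hjp : j ≤ p.length := by omega
  have hsplit : p.take j ++ p.drop j = p := List.take_append_drop j p
  have h1 : RT.subAt d p = (RT.subAt d (p.take j)).bind (fun t => RT.subAt t (p.drop j)) := by
    conv_lhs => rw [← hsplit]
    exact RT.subAt_append _ _ _
  obtain ⟨t, ht⟩ : ∃ t, RT.subAt d (p.take j) = some t := by
    cases h : RT.subAt d (p.take j) with
    | none => rw [h1, h] at hsub; exact absurd hsub (by simp)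
    | some t => exact ⟨t, rfl⟩
  have hsubt : RT.subAt t (p.drop j) = some t0 := by
    rw [h1, ht] at hsub
    exact hsub
  have hseq : RT.seqTo t (p.drop j) = some (ρ.drop j) := by
    have := RT.seqTo_append_drop (p.take j) d t (p.drop j) ρ ht (by rw [hsplit]; exact hρ)
    rwa [List.length_take, min_eq_left hjp] at this
  exact ⟨p.take j, p.drop j, t, w, ht, helem,
    ⟨⟨t0, hsubt, hleaf⟩, ρ.drop j, hseq, hcw⟩⟩

end Needle
/-! ### Absorption of heavy trees -/

section Absorb

variable {K : Type} [AddCommMonoid K]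

lemma absorb_strong {τ : Type} (f : τ → K) (Big : τ → Prop) (sz : τ → ℕ) :
    ∀ (n : ℕ) (S : Finset τ), (S.filter Big).card = n →
      (∀ b ∈ S, Big b → ∃ G : Finset τ, G ⊆ S.filter (fun x => sz x < sz b) ∧
        f b + ∑ g ∈ G, f g = ∑ g ∈ G, f g) →
      ∑ x ∈ S, f x = ∑ x ∈ S.filter (fun x => ¬ Big x), f x := by
  intro n
  induction n using Nat.strong_induction_on with
  | _ n ih =>
    intro S hcard hG
    rcases Nat.eq_zero_or_pos n with rfl | hpos
    · have hempty : S.filter Big = ∅ := Finset.card_eq_zero.mp hcard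
      have heq : S.filter (fun x => ¬ Big x) = S := by
        apply Finset.filter_true_of_mem
        intro x hx hbig
        have hmem : x ∈ S.filter Big := Finset.mem_filter.mpr ⟨hx, hbig⟩
        rw [hempty] at hmem
        exact absurd hmem (Finset.notMem_empty x)
      rw [heq]
    · have hne : (S.filter Big).Nonempty := Finset.card_pos.mp (by omega)
      obtain ⟨b, hbmem, hbmax⟩ := Finset.exists_max_image (S.filter Big) sz hne
      rw [Finset.mem_filter] at hbmem
      obtain ⟨hbS, hbBig⟩ := hbmem
      obtain ⟨G, hGsub, habs⟩ := hG b hbS hbBig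
      have hGsub' : G ⊆ S.erase b := by
        intro x hx
        have hxm := hGsub hx
        rw [Finset.mem_filter] at hxm
        refine Finset.mem_erase.mpr ⟨?_, hxm.1⟩
        intro he
        rw [he] at hxm
        omega
      have h1 : ∑ x ∈ S, f x = f b + ∑ x ∈ S.erase b, f x :=
        (Finset.add_sum_erase S f hbS).symm
      have h2 : f b + ∑ x ∈ S.erase b, f x = ∑ x ∈ S.erase b, f x := by
        rw [← Finset.sum_sdiff hGsub', add_left_comm, habs]
      have hcard' : ((S.erase b).filter Big).card < n := by
        rw [Finset.filter_erase,
          Finset.card_erase_of_mem (Finset.mem_filter.mpr ⟨hbS, hbBig⟩), hcard]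
        omega
      have hG' : ∀ b' ∈ S.erase b, Big b' →
          ∃ G' : Finset τ, G' ⊆ (S.erase b).filter (fun x => sz x < sz b') ∧
            f b' + ∑ g ∈ G', f g = ∑ g ∈ G', f g := by
        intro b' hb' hbig'
        obtain ⟨G', hsub', habs'⟩ := hG b' (Finset.mem_of_mem_erase hb') hbig'
        refine ⟨G', ?_, habs'⟩
        intro x hx
        have hxm := hsub' hx
        rw [Finset.mem_filter] at hxm
        have hle : sz b' ≤ sz b := hbmax b'
          (Finset.mem_filter.mpr ⟨Finset.mem_of_mem_erase hb', hbig'⟩)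
        refine Finset.mem_filter.mpr ⟨Finset.mem_erase.mpr ⟨?_, hxm.1⟩, hxm.2⟩
        intro he
        rw [he] at hxm
        omega
      have hrec := ih _ hcard' (S.erase b) rfl hG'
      have hfin : (S.erase b).filter (fun x => ¬ Big x) = S.filter (fun x => ¬ Big x) := by
        rw [Finset.filter_erase]
        apply Finset.erase_eq_of_notMem
        intro hmem
        exact (Finset.mem_filter.mp hmem).2 hbBig
      rw [h1, h2, hrec, hfin]

end Absorb

/-! ### Cutout trees -/

section Cotrees

variable {R : Type} {ar : R → ℕ}

lemma cutW_numNodes {w : List R} (hw : 1 < w.length) {x y : RT R ar} (h : CutW w x y) :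
    RT.numNodes y < RT.numNodes x := by
  obtain ⟨p, q, t, s, hp, hq, hseq, rfl⟩ := h
  have hql : w.length = q.length + 1 := RT.seqTo_length q t w hseq
  have hqne : q ≠ [] := by
    intro h
    rw [h] at hql
    simp at hql
    omega
  exact RT.numNodes_replaceAt_lt p x t s hp (RT.numNodes_subAt_lt q t s hq hqne)

lemma cotreesW_lt_numNodes {w : List R} (hw : 1 < w.length) {t d' : RT R ar}
    (h : d' ∈ cotreesW w t) : RT.numNodes d' < RT.numNodes t := by
  induction h with
  | single h => exact cutW_numNodes hw h
  | tail _ h ih => exact lt_trans (cutW_numNodes hw h) ih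

lemma cotreesW_finite [Fintype R] {w : List R} (hw : 1 < w.length) (t : RT R ar) :
    (cotreesW w t).Finite :=
  (RT.finite_numNodes_le (RT.numNodes t)).subset fun _ hx =>
    le_of_lt (cotreesW_lt_numNodes hw hx)

lemma wellSorted_subAt {N : Type} {lhs : R → N} {rhs : R → List N} :
    ∀ (p : List ℕ) (d t : RT R fun r => (rhs r).length), WellSorted lhs rhs d →
      RT.subAt d p = some t → WellSorted lhs rhs t := by
  intro p
  induction p with
  | nil =>
    intro d t h hsub
    rw [RT.subAt_nil, Option.some_inj] at hsub
    subst hsub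
    exact h
  | cons i p ih =>
    intro d t h hsub
    cases d with
    | node r ts =>
      cases h with
      | node _ _ hsorts hrec =>
        by_cases hi : i < (rhs r).length
        · rw [RT.subAt_cons, dif_pos hi] at hsub
          exact ih _ _ (hrec ⟨i, hi⟩) hsub
        · rw [RT.subAt_cons, dif_neg hi] at hsub
          exact absurd hsub (by simp)

end Cotrees

/-! ### Heavy trees are absorbed -/

section MainLemmas

variable {K : Type} [AddCommMonoid K] {N R : Type} [Fintype N] [Nonempty N] [Fintype R]
variable (lhs : R → N) (rhs : R → List N)
variable (wt : ∀ r : R, (Fin (rhs r).length → K) → K)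
variable (e : Fin (Fintype.card N) → N)

lemma mrec_rep_cut {n : ℕ} {A : N} {b x y : RT R fun r => (rhs r).length} {p₁ : List ℕ}
    {w : List R} (hb : b ∈ Mrec lhs rhs e n A) (hsub : RT.subAt b p₁ = some x)
    (hele : ElementaryCycle w) (hcut : CutW w x y) :
    RT.replaceAt b p₁ y ∈ Mrec lhs rhs e n A := by
  obtain ⟨π, q, tt, s, hπ, hq, hseq, rfl⟩ := hcut
  have hroot : tt.rootRule = s.rootRule := by
    have h1 := RT.seqTo_head q tt w hseq
    have h2 := RT.seqTo_getLast q tt s w hq hseq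
    have h3 := hele.2.1
    rw [h1, h2] at h3
    exact Option.some_injective _ h3
  have hrep : RT.replaceAt b p₁ (RT.replaceAt x π s) = RT.replaceAt b (p₁ ++ π) s :=
    (RT.replaceAt_append p₁ b x π s hsub).symm
  rw [hrep]
  apply mrec_cut lhs rhs e n A b hb (p₁ ++ π) tt q s
  · rw [RT.subAt_append, hsub]
    exact hπ
  · exact hq
  · rw [hroot]

lemma mrec_rep_cotree {n : ℕ} {A : N} {b t x : RT R fun r => (rhs r).length} {p₁ : List ℕ}
    {w : List R} (hele : ElementaryCycle w) (hb : b ∈ Mrec lhs rhs e n A)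
    (hsub : RT.subAt b p₁ = some t) (hx : x ∈ cotreesW w t) :
    RT.replaceAt b p₁ x ∈ Mrec lhs rhs e n A := by
  induction hx with
  | single h => exact mrec_rep_cut lhs rhs e hb hsub hele h
  | @tail mid x' htr hcut ih =>
    have hsome : RT.subAt (RT.replaceAt b p₁ mid) p₁ = some mid :=
      RT.subAt_replaceAt p₁ b mid (by rw [hsub]; rfl)
    have := mrec_rep_cut lhs rhs e ih hsome hele hcut
    rwa [RT.replaceAt_replaceAt] at this

lemma absorb_tree (hD : ∀ r : R, DOp (wt r)) (c : ℕ) (hclosed : CClosed lhs rhs wt c)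
    {n : ℕ} {A : N} {b : RT R fun r => (rhs r).length} (hb : b ∈ Mrec lhs rhs e n A)
    (hh : cycBound R c ≤ RT.height b) :
    ∃ G : Finset (RT R fun r => (rhs r).length),
      (∀ g ∈ G, g ∈ Mrec lhs rhs e n A ∧ RT.numNodes g < RT.numNodes b) ∧
      wtval wt b + ∑ g ∈ G, wtval wt g = ∑ g ∈ G, wtval wt g := by
  obtain ⟨p₁, p₂, t, w, hsub, hele, hleaf⟩ := tall_tree_cyclic c b hh
  have hwlen : 1 < w.length := hele.1
  have hws : WellSorted lhs rhs t :=
    wellSorted_subAt p₁ b t (mrec_wellSorted lhs rhs e hb) hsub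
  have hid := hclosed t hws w hele ⟨p₂, hleaf⟩
  have hfin : (cotreesW w t).Finite := cotreesW_finite hwlen t
  rw [finsum_mem_eq_finite_toFinset_sum _ hfin] at hid
  set G₀ := hfin.toFinset with hG₀
  have hctx : ∀ x : RT R fun r => (rhs r).length,
      wtval wt (RT.replaceAt b p₁ x) = ctxval wt b p₁ (wtval wt x) :=
    fun x => ctxval_replaceAt wt p₁ b t x hsub
  have hkey : wtval wt b + ∑ x ∈ G₀, wtval wt (RT.replaceAt b p₁ x)
      = ∑ x ∈ G₀, wtval wt (RT.replaceAt b p₁ x) := by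
    have h1 : wtval wt b = ctxval wt b p₁ (wtval wt t) := by
      conv_lhs => rw [← RT.replaceAt_self p₁ b t hsub]
      exact hctx t
    calc wtval wt b + ∑ x ∈ G₀, wtval wt (RT.replaceAt b p₁ x)
        = ctxval wt b p₁ (wtval wt t) + ∑ x ∈ G₀, ctxval wt b p₁ (wtval wt x) := by
          rw [← h1]
          congr 1
          exact Finset.sum_congr rfl fun x _ => hctx x
      _ = ctxval wt b p₁ (wtval wt t) + ctxval wt b p₁ (∑ x ∈ G₀, wtval wt x) := by
          rw [ctxval_sum wt hD G₀ _ p₁ b t hsub]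
      _ = ctxval wt b p₁ (wtval wt t + ∑ x ∈ G₀, wtval wt x) :=
          (ctxval_add wt hD p₁ b t hsub _ _).symm
      _ = ctxval wt b p₁ (∑ x ∈ G₀, wtval wt x) := by rw [hid]
      _ = ∑ x ∈ G₀, ctxval wt b p₁ (wtval wt x) := ctxval_sum wt hD G₀ _ p₁ b t hsub
      _ = ∑ x ∈ G₀, wtval wt (RT.replaceAt b p₁ x) :=
          Finset.sum_congr rfl fun x _ => (hctx x).symm
  have hinj : ∀ x ∈ G₀, ∀ y ∈ G₀, RT.replaceAt b p₁ x = RT.replaceAt b p₁ y → x = y := by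
    intro x _ y _ hxy
    have hx := RT.subAt_replaceAt p₁ b x (by rw [hsub]; rfl)
    have hy := RT.subAt_replaceAt p₁ b y (by rw [hsub]; rfl)
    rw [hxy, hy] at hx
    exact (Option.some_injective _ hx).symm
  refine ⟨G₀.image (fun x => RT.replaceAt b p₁ x), ?_, ?_⟩
  · intro g hg
    rw [Finset.mem_image] at hg
    obtain ⟨x, hxG, rfl⟩ := hg
    rw [hG₀, Set.Finite.mem_toFinset] at hxG
    constructor
    · exact mrec_rep_cotree lhs rhs e hele hb hsub hxG
    · exact RT.numNodes_replaceAt_lt p₁ b t _ hsub (cotreesW_lt_numNodes hwlen hxG)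
  · rw [Finset.sum_image hinj]
    exact hkey

end MainLemmas
/-- Termination of the value computation algorithm: for every `c`-closed weighted system,
the value computation recursion stabilizes. -/
theorem value_computation_terminates {N R K : Type} [Fintype N] [Nonempty N] [Fintype R]
    [AddCommMonoid K]
    (S : InfSum K) (hdc : S.DComplete)
    (Ω : ∀ n : ℕ, Set ((Fin n → K) → K)) (hΩ0 : HasZeroOps Ω) (hΩd : DistributiveOps Ω)
    (lhs : R → N) (rhs : R → List N)
    (wt : ∀ r : R, (Fin (rhs r).length → K) → K) (hwt : ∀ r : R, wt r ∈ Ω (rhs r).length)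
    (c : ℕ) (hclosed : CClosed lhs rhs wt c)
    (e : Fin (Fintype.card N) → N) (he : Function.Bijective e) :
    ∃ n₀ : ℕ, ∀ n, n₀ ≤ n → ∀ A : N, Vrec lhs rhs wt e n A = Vrec lhs rhs wt e n₀ A := by
  have hD : ∀ r : R, DOp (wt r) :=
    fun r => ⟨(hΩd _ _ (hwt r)).1, (hΩd _ _ (hwt r)).2⟩
  set H := cycBound R c with hH
  set n₀ := Fintype.card N * H with hn₀
  have hSA : ∀ A : N, {d : RT R fun r => (rhs r).length |
      WellSorted lhs rhs d ∧ lhs d.rootRule = A ∧ RT.height d < H}.Finite := fun A =>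
    (RT.finite_height H).subset fun d hd => hd.2.2
  have key : ∀ n, n₀ ≤ n → ∀ A,
      Vrec lhs rhs wt e n A = ∑ d ∈ (hSA A).toFinset, wtval wt d := by
    intro n hn A
    rw [vrec_eq_sum lhs rhs wt e hD n A]
    have hyp : ∀ b ∈ (mrec_finite lhs rhs e n A).toFinset, H ≤ RT.height b →
        ∃ G : Finset (RT R fun r => (rhs r).length),
          G ⊆ (mrec_finite lhs rhs e n A).toFinset.filter
            (fun x => RT.numNodes x < RT.numNodes b) ∧
          wtval wt b + ∑ g ∈ G, wtval wt g = ∑ g ∈ G, wtval wt g := by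
      intro b hb hbig
      rw [Set.Finite.mem_toFinset] at hb
      obtain ⟨G, hGmem, habs'⟩ := absorb_tree lhs rhs wt e hD c hclosed hb hbig
      refine ⟨G, ?_, habs'⟩
      intro g hg
      rw [Finset.mem_filter, Set.Finite.mem_toFinset]
      exact ⟨(hGmem g hg).1, (hGmem g hg).2⟩
    have habs := absorb_strong (f := wtval wt) (Big := fun d => H ≤ RT.height d)
      (sz := RT.numNodes) _ ((mrec_finite lhs rhs e n A).toFinset) rfl hyp
    rw [habs]
    apply Finset.sum_congr _ (fun _ _ => rfl)
    ext x
    simp only [Finset.mem_filter, Set.Finite.mem_toFinset, Set.mem_setOf_eq]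
    constructor
    · rintro ⟨hx, hsmall⟩
      exact ⟨mrec_wellSorted lhs rhs e hx, mrec_sort lhs rhs e hx, by omega⟩
    · rintro ⟨hws, hsort, hsmall⟩
      refine ⟨mrec_mono lhs rhs e hn A
        (mrec_cover lhs rhs e he H A x hws hsort hsmall), by omega⟩
  refine ⟨n₀, fun n hn A => ?_⟩
  rw [key n hn A, key n₀ le_rfl A]
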